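/- There exists a constant C > 0 such that the following holds. Let ℓ > 0 with ℓ⁻¹ ∈ ℕ, let m be an integer with 0 ≤ m ≤ 1/(2ℓ), and let k ∈ {0,…,ℓ_m⁻¹−1}³ with k₁ + 1 ≤ ℓ_m⁻¹ − 1. Then Σ_{n=0}^{⌊1/(2ℓ)⌋} Σ_{s' ∈ {0,…,ℓ_n⁻¹−1}³} |B_{ℓ_m,k} ∩ B_{ℓ_n,s'}| · |B_{ℓ_m,k+e₁} ∩ B_{ℓ_n,s'}| / (ℓ_m³ ℓ_n³) ≥ C ℓ⁻¹, where e₁ = (1,0,0) and |·| denotes Lebesgue measure. (Lower bound on the nearest-neighbour edge weight of the discrete operator L(ℓ_m) arising from the family of partitions.) -/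

import Mathlib

set_option maxHeartbeats 1000000

open MeasureTheory Real

/-- The cube `B_{ℓ,k} = ∏_i [k_i ℓ, (k_i+1) ℓ]`. -/
def B (ℓ : ℝ) (k : Fin 3 → ℕ) : Set (Fin 3 → ℝ) :=
  Set.Icc (fun i => (k i : ℝ) * ℓ) (fun i => ((k i : ℝ) + 1) * ℓ)

lemma volB_inter (a b : ℝ) (k s : Fin 3 → ℕ) :
    (volume (B a k ∩ B b s)).toReal
      = ∏ i, max (min (((k i:ℝ)+1)*a) (((s i:ℝ)+1)*b) - max ((k i:ℝ)*a) ((s i:ℝ)*b)) 0 := by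
  unfold B
  rw [Set.Icc_inter_Icc, Real.volume_Icc_pi, ENNReal.toReal_prod]
  refine Finset.prod_congr rfl fun i _ => ?_
  rw [ENNReal.toReal_ofReal']
  simp [Pi.sup_apply, Pi.inf_apply]

lemma f_lb (D j : ℕ) (hD : 0 < D) (hj : j < D) :
    ((min j (D - j) : ℕ):ℝ)/(2*D) ≤ (j:ℝ)/D * (1 - (j:ℝ)/D) := by
  have hDR : (0:ℝ) < D := by exact_mod_cast hD
  have hjR : (0:ℝ) ≤ j := Nat.cast_nonneg j
  have hjD : (j:ℝ) ≤ D := by exact_mod_cast hj.le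
  have h1 : ((D - j : ℕ):ℝ) = (D:ℝ) - j := by
    push_cast [Nat.cast_sub hj.le]; ring
  have h2 : (1 - (j:ℝ)/D) = ((D:ℝ) - j)/D := by field_simp
  rw [h2, div_mul_div_comm, div_le_div_iff₀ (by positivity) (by positivity)]
  have hmin : ((min j (D - j) : ℕ):ℝ) = min (j:ℝ) ((D:ℝ) - j) := by
    push_cast [Nat.cast_min, h1]; rfl
  rw [hmin]
  rcases le_total (j:ℝ) ((D:ℝ) - j) with h | h
  · rw [min_eq_left h]
    nlinarith [mul_nonneg (mul_nonneg hjR hDR.le) (sub_nonneg.2 h)]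
  · rw [min_eq_right h]
    nlinarith [mul_nonneg (mul_nonneg (sub_nonneg.2 hjD) hDR.le) (sub_nonneg.2 h)]

lemma f_nonneg (D j : ℕ) (hD : 0 < D) (hj : j ≤ D) : (0:ℝ) ≤ (j:ℝ)/D * (1 - (j:ℝ)/D) := by
  have hDR : (0:ℝ) < D := by exact_mod_cast hD
  have : (j:ℝ) ≤ D := by exact_mod_cast hj
  have h1 : (0:ℝ) ≤ (j:ℝ)/D := by positivity
  have h2 : (j:ℝ)/D ≤ 1 := by rw [div_le_one hDR]; exact this
  nlinarith

lemma key_sum (D q1 M R : ℕ) (hD : 2 ≤ D) (hcop : Nat.Coprime q1 D)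
    (hRM : R ≤ M + 1) (hDR : D ≤ 2 * R) (hR : 2 ≤ R) :
    (R : ℝ)/128 ≤ ∑ n ∈ Finset.range R,
      (((q1*(M-n)) % D : ℕ):ℝ)/D * (1 - (((q1*(M-n)) % D : ℕ):ℝ)/D) := by
  have hD0 : 0 < D := by omega
  set ρ : ℕ → ℕ := fun n => (q1 * (M - n)) % D with hρ
  have hρlt : ∀ n, ρ n < D := fun n => Nat.mod_lt _ hD0
  -- injectivity of residues on div-classes
  have hmod : ∀ n₁, n₁ < R → ∀ n₂, n₂ < R → ρ n₁ = ρ n₂ → n₁ % D = n₂ % D := by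
    intro n₁ h₁ n₂ h₂ h
    have hc : Nat.gcd D q1 = 1 := (Nat.coprime_comm.mp hcop)
    have h2 : M - n₁ ≡ M - n₂ [MOD D] := Nat.ModEq.cancel_left_of_coprime hc h
    have h3 := h2.add_right (n₁ + n₂)
    have e1 : M - n₁ + (n₁ + n₂) = M + n₂ := by omega
    have e2 : M - n₂ + (n₁ + n₂) = M + n₁ := by omega
    rw [e1, e2] at h3
    exact ((Nat.ModEq.add_left_cancel' M h3).symm : n₁ ≡ n₂ [MOD D])
  have hcount : ∀ a, ((Finset.range R).filter (fun n => ρ n = a)).card ≤ (R-1)/D + 1 := by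
    intro a
    have : ((Finset.range R).filter (fun n => ρ n = a)).card ≤
        (Finset.range ((R-1)/D + 1)).card := by
      apply Finset.card_le_card_of_injOn (fun n => n / D)
      · intro n hn
        simp only [Finset.coe_filter, Finset.mem_coe, Set.mem_setOf_eq, Finset.mem_filter, Finset.mem_range] at hn ⊢
        exact Nat.lt_succ_of_le (Nat.div_le_div_right (c := D) (by omega : n ≤ R - 1))
      · intro n₁ h₁ n₂ h₂ hdiv
        simp only [Finset.coe_filter, Finset.mem_range, Set.mem_setOf_eq] at h₁ h₂
        have hm := hmod n₁ h₁.1 n₂ h₂.1 (h₁.2.trans h₂.2.symm)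
        calc n₁ = D * (n₁/D) + n₁ % D := (Nat.div_add_mod _ _).symm
          _ = D * (n₂/D) + n₂ % D := by simp only at hdiv; rw [hdiv, hm]
          _ = n₂ := Nat.div_add_mod _ _
    simpa using this
  have hnn : ∀ n ∈ Finset.range R, (0:ℝ) ≤ ((ρ n : ℕ):ℝ)/D * (1 - ((ρ n : ℕ):ℝ)/D) :=
    fun n _ => f_nonneg D (ρ n) hD0 (hρlt n).le
  have hfl : ∀ n, ((min (ρ n) (D - ρ n) : ℕ):ℝ)/(2*D) ≤ ((ρ n : ℕ):ℝ)/D * (1 - ((ρ n : ℕ):ℝ)/D) :=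
    fun n => f_lb D (ρ n) hD0 (hρlt n)
  have hDR0 : (0:ℝ) < D := by exact_mod_cast hD0
  have hc1 : (((R-1)/D : ℕ):ℝ) ≤ ((R:ℝ)-1)/D := by
    have := Nat.cast_div_le (α := ℝ) (m := R-1) (n := D)
    have hA : ((R-1 : ℕ):ℝ) = (R:ℝ) - 1 := by
      push_cast [Nat.cast_sub (by omega : 1 ≤ R)]; ring
    rw [hA] at this; exact this
  by_cases hD8 : 8 ≤ D
  · -- large D case
    set v := D / 8 with hv
    have hv1 : 1 ≤ v := by omega
    have hv16 : D ≤ 16 * v := by omega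
    have hv8 : 8 * v ≤ D := by omega
    set good := (Finset.range R).filter (fun n => v ≤ ρ n ∧ ρ n ≤ D - v) with hgood
    set badset := (Finset.range v) ∪ (Finset.Ioo (D - v) D) with hbadset
    have hbadcard : ((Finset.range R).filter (fun n => ¬(v ≤ ρ n ∧ ρ n ≤ D - v))).card
        ≤ (2*v) * ((R-1)/D + 1) := by
      have hbadsub : (Finset.range R).filter (fun n => ¬(v ≤ ρ n ∧ ρ n ≤ D - v)) ⊆
          badset.biUnion (fun a => (Finset.range R).filter (fun n => ρ n = a)) := by
        intro n hn
        simp only [Finset.mem_filter, Finset.mem_range] at hn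
        refine Finset.mem_biUnion.2 ⟨ρ n, ?_, by
          simp only [Finset.mem_filter, Finset.mem_range]; simp [hn.1]⟩
        simp only [hbadset, Finset.mem_union, Finset.mem_range, Finset.mem_Ioo]
        have := hρlt n
        omega
      calc _ ≤ (badset.biUnion (fun a => (Finset.range R).filter (fun n => ρ n = a))).card :=
            Finset.card_le_card hbadsub
        _ ≤ ∑ a ∈ badset, ((Finset.range R).filter (fun n => ρ n = a)).card :=
            Finset.card_biUnion_le
        _ ≤ ∑ _a ∈ badset, ((R-1)/D + 1) := Finset.sum_le_sum (fun a _ => hcount a)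
        _ = badset.card * ((R-1)/D + 1) := by rw [Finset.sum_const, smul_eq_mul]
        _ ≤ (2*v) * ((R-1)/D + 1) := by
            apply Nat.mul_le_mul_right
            calc badset.card ≤ (Finset.range v).card + (Finset.Ioo (D-v) D).card :=
                  Finset.card_union_le _ _
              _ ≤ 2*v := by rw [Finset.card_range, Nat.card_Ioo]; omega
    have hgoodcard : (R:ℝ)/4 ≤ (good.card : ℝ) := by
      have hsplit := Finset.card_filter_add_card_filter_not
        (s := Finset.range R) (p := fun n => v ≤ ρ n ∧ ρ n ≤ D - v)
      rw [Finset.card_range] at hsplit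
      have hbadR : ((((Finset.range R).filter (fun n => ¬(v ≤ ρ n ∧ ρ n ≤ D - v))).card : ℝ))
          ≤ (3*(R:ℝ) - 1)/4 := by
        have h1 : ((((Finset.range R).filter (fun n => ¬(v ≤ ρ n ∧ ρ n ≤ D - v))).card : ℝ))
            ≤ ((2*v) * ((R-1)/D + 1) : ℕ) := by exact_mod_cast hbadcard
        have h2 : (((2*v) * ((R-1)/D + 1) : ℕ) : ℝ) ≤ (2*(v:ℝ)) * (((R:ℝ)-1)/D + 1) := by
          push_cast
          have : (((R-1)/D : ℕ):ℝ) + 1 ≤ ((R:ℝ)-1)/D + 1 := by linarith [hc1]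
          have hvpos : (0:ℝ) ≤ 2*(v:ℝ) := by positivity
          nlinarith [hc1, hvpos]
        have h3 : (2*(v:ℝ)) ≤ (D:ℝ)/4 := by
          have : (8*v : ℕ) ≤ D := hv8
          have : (8*(v:ℝ)) ≤ D := by exact_mod_cast this
          linarith
        have h4 : (2*(v:ℝ)) * (((R:ℝ)-1)/D + 1) ≤ ((D:ℝ)/4) * (((R:ℝ)-1)/D + 1) := by
          apply mul_le_mul_of_nonneg_right h3
          have hR2 : (2:ℝ) ≤ R := by exact_mod_cast hR
          have : (0:ℝ) ≤ ((R:ℝ)-1)/D := div_nonneg (by linarith) hDR0.le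
          linarith
        have h5 : ((D:ℝ)/4) * (((R:ℝ)-1)/D + 1) = ((R:ℝ)-1)/4 + (D:ℝ)/4 := by
          field_simp
        have h6 : (D:ℝ) ≤ 2*R := by exact_mod_cast hDR
        calc ((((Finset.range R).filter (fun n => ¬(v ≤ ρ n ∧ ρ n ≤ D - v))).card : ℝ))
            ≤ (2*(v:ℝ)) * (((R:ℝ)-1)/D + 1) := le_trans h1 h2
          _ ≤ ((D:ℝ)/4) * (((R:ℝ)-1)/D + 1) := h4
          _ = ((R:ℝ)-1)/4 + (D:ℝ)/4 := h5
          _ ≤ (3*(R:ℝ) - 1)/4 := by linarith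
      have hgR : (good.card : ℝ) + ((((Finset.range R).filter
          (fun n => ¬(v ≤ ρ n ∧ ρ n ≤ D - v))).card : ℝ)) = R := by exact_mod_cast hsplit
      linarith
    have hterm : ∀ n ∈ good, (1:ℝ)/128 * 4 ≤ ((ρ n : ℕ):ℝ)/D * (1 - ((ρ n : ℕ):ℝ)/D) := by
      intro n hn
      simp only [hgood, Finset.mem_filter] at hn
      have hmin : v ≤ min (ρ n) (D - ρ n) := by
        have := hρlt n; omega
      have hminR : (v:ℝ) ≤ ((min (ρ n) (D - ρ n) : ℕ):ℝ) := by exact_mod_cast hmin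
      have h16 : (D:ℝ) ≤ 16*(v:ℝ) := by exact_mod_cast hv16
      have h132 : (1:ℝ)/128*4 ≤ (v:ℝ)/(2*D) := by
        rw [le_div_iff₀ (by positivity)]
        nlinarith
      calc (1:ℝ)/128*4 ≤ (v:ℝ)/(2*D) := h132
        _ ≤ ((min (ρ n) (D - ρ n) : ℕ):ℝ)/(2*D) := by gcongr
        _ ≤ _ := hfl n
    calc (R:ℝ)/128 = ((R:ℝ)/4) * ((1:ℝ)/128*4) := by ring
      _ ≤ (good.card:ℝ) * ((1:ℝ)/128*4) := by
          apply mul_le_mul_of_nonneg_right hgoodcard (by norm_num)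
      _ ≤ ∑ n ∈ good, ((ρ n : ℕ):ℝ)/D * (1 - ((ρ n : ℕ):ℝ)/D) := by
          have := Finset.card_nsmul_le_sum good
            (fun n => ((ρ n : ℕ):ℝ)/D * (1 - ((ρ n : ℕ):ℝ)/D)) ((1:ℝ)/128*4) hterm
          rw [nsmul_eq_mul] at this
          linarith
      _ ≤ _ := Finset.sum_le_sum_of_subset_of_nonneg (Finset.filter_subset _ _)
          (fun n hn _ => hnn n hn)
  · -- small D case
    have hD7 : D ≤ 7 := by omega
    set good := (Finset.range R).filter (fun n => ¬ ρ n = 0) with hgood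
    have hbadcard : ((Finset.range R).filter (fun n => ¬¬ ρ n = 0)).card ≤ (R-1)/D + 1 := by
      refine le_trans (Finset.card_le_card ?_) (hcount 0)
      intro n hn
      simp only [Finset.mem_filter, not_not] at hn ⊢
      exact hn
    have hsplit := Finset.card_filter_add_card_filter_not
      (s := Finset.range R) (p := fun n => ¬ ρ n = 0)
    rw [Finset.card_range] at hsplit
    have hgc : good.card + ((Finset.range R).filter (fun a => ¬¬ ρ a = 0)).card = R := hsplit
    have hnatd : ((R-1)/D : ℕ) ≤ (R-1)/2 := Nat.div_le_div_left hD (by norm_num)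
    have hkey : 14 * R ≤ 128 * good.card := by omega
    have hterm : ∀ n ∈ good, (1:ℝ)/14 ≤ ((ρ n : ℕ):ℝ)/D * (1 - ((ρ n : ℕ):ℝ)/D) := by
      intro n hn
      simp only [hgood, Finset.mem_filter] at hn
      have hmin : 1 ≤ min (ρ n) (D - ρ n) := by
        have := hρlt n; omega
      have hminR : (1:ℝ) ≤ ((min (ρ n) (D - ρ n) : ℕ):ℝ) := by exact_mod_cast hmin
      have hD7R : (D:ℝ) ≤ 7 := by exact_mod_cast hD7
      calc (1:ℝ)/14 ≤ (1:ℝ)/(2*D) := by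
            apply one_div_le_one_div_of_le (by positivity)
            linarith
        _ ≤ ((min (ρ n) (D - ρ n) : ℕ):ℝ)/(2*D) := by gcongr
        _ ≤ _ := hfl n
    have hkeyR : (R:ℝ)/128 ≤ (good.card:ℝ) * ((1:ℝ)/14) := by
      have : (14*R : ℕ) ≤ (128 * good.card : ℕ) := hkey
      have h : (14*(R:ℝ)) ≤ 128 * (good.card:ℝ) := by exact_mod_cast this
      linarith
    calc (R:ℝ)/128 ≤ (good.card:ℝ) * ((1:ℝ)/14) := hkeyR
      _ ≤ ∑ n ∈ good, ((ρ n : ℕ):ℝ)/D * (1 - ((ρ n : ℕ):ℝ)/D) := by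
          have := Finset.card_nsmul_le_sum good
            (fun n => ((ρ n : ℕ):ℝ)/D * (1 - ((ρ n : ℕ):ℝ)/D)) ((1:ℝ)/14) hterm
          rw [nsmul_eq_mul] at this
          linarith
      _ ≤ _ := Finset.sum_le_sum_of_subset_of_nonneg (Finset.filter_subset _ _)
          (fun n hn _ => hnn n hn)

lemma arith_main (A q M : ℕ) (hA : 2 ≤ A) (hAM : A ≤ M) (hMA : M ≤ 2*A)
    (hq1 : 1 ≤ q) (hqA : q < A) :
    (M:ℝ)/256 ≤ ∑ n ∈ Finset.range (M/2+1),
      (((q*(M-n)) % A : ℕ):ℝ)/A * (1 - (((q*(M-n)) % A : ℕ):ℝ)/A) := by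
  set g := Nat.gcd q A with hg
  have hg0 : 0 < g := Nat.gcd_pos_of_pos_left _ (by omega)
  set D := A / g with hDdef
  set q1 := q / g with hq1def
  have hDg : g * D = A := Nat.mul_div_cancel' (Nat.gcd_dvd_right q A)
  have hqg : g * q1 = q := Nat.mul_div_cancel' (Nat.gcd_dvd_left q A)
  have hcop : Nat.Coprime q1 D := Nat.coprime_div_gcd_div_gcd hg0
  have hq1pos : 1 ≤ q1 := by
    rcases Nat.eq_zero_or_pos q1 with h | h
    · rw [h, mul_zero] at hqg; omega
    · exact h
  have hq1D : q1 < D := by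
    have : g * q1 < g * D := by rw [hqg, hDg]; exact hqA
    exact Nat.lt_of_mul_lt_mul_left this
  have hD2 : 2 ≤ D := by omega
  have hDA : D ≤ A := Nat.div_le_self _ _
  have hsummand : ∀ n, (((q*(M-n)) % A : ℕ):ℝ)/A = (((q1*(M-n)) % D : ℕ):ℝ)/D := by
    intro n
    have h1 : (q*(M-n)) % A = g * ((q1*(M-n)) % D) := by
      rw [← hqg, ← hDg, mul_assoc, Nat.mul_mod_mul_left]
    rw [h1, ← hDg]
    push_cast
    rw [mul_comm (g:ℝ) _, mul_comm (g:ℝ) _, mul_div_mul_right]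
    exact_mod_cast hg0.ne'
  have hsum : ∑ n ∈ Finset.range (M/2+1),
      (((q*(M-n)) % A : ℕ):ℝ)/A * (1 - (((q*(M-n)) % A : ℕ):ℝ)/A)
      = ∑ n ∈ Finset.range (M/2+1),
      (((q1*(M-n)) % D : ℕ):ℝ)/D * (1 - (((q1*(M-n)) % D : ℕ):ℝ)/D) :=
    Finset.sum_congr rfl (fun n _ => by rw [hsummand n])
  rw [hsum]
  have hks := key_sum D q1 M (M/2+1) hD2 hcop (by omega) (by omega) (by omega)
  have hMR : (M:ℝ)/2 ≤ ((M/2+1 : ℕ):ℝ) := by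
    have : M ≤ 2*(M/2+1) := by omega
    have h2 : (M:ℝ) ≤ 2*((M/2+1 : ℕ):ℝ) := by exact_mod_cast this
    linarith
  calc (M:ℝ)/256 = ((M:ℝ)/2)/128 := by ring
    _ ≤ ((M/2+1 : ℕ):ℝ)/128 := by linarith
    _ ≤ _ := hks

lemma seg_lb' {lo1 hi1 lo2 hi2 b : ℝ} (h1 : lo1 + b ≤ hi1) (h2 : lo1 + b ≤ hi2)
    (h3 : lo2 + b ≤ hi1) (h4 : lo2 + b ≤ hi2) :
    b ≤ max (min hi1 hi2 - max lo1 lo2) 0 := by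
  refine le_trans ?_ (le_max_left _ _)
  rcases le_total lo1 lo2 with h|h <;> rcases le_total hi1 hi2 with h'|h'
  · rw [max_eq_right h, min_eq_left h']; linarith
  · rw [max_eq_right h, min_eq_right h']; linarith
  · rw [max_eq_left h, min_eq_left h']; linarith
  · rw [max_eq_left h, min_eq_right h']; linarith

lemma mid_seg (A N c s rem : ℕ) (hA : 0 < A) (hN : 0 < N) (hNA : N ≤ 2*A)
    (hdm : 2*A*s + rem = (2*c+1)*N) (hrem : rem < 2*A) :
    (1:ℝ)/(2*A) ≤ max (min (((c:ℝ)+1)*(A:ℝ)⁻¹) (((s:ℝ)+1)*(N:ℝ)⁻¹)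
      - max ((c:ℝ)*(A:ℝ)⁻¹) ((s:ℝ)*(N:ℝ)⁻¹)) 0 := by
  have haR : (0:ℝ) < A := by exact_mod_cast hA
  have hnR : (0:ℝ) < N := by exact_mod_cast hN
  have hNAR : (N:ℝ) ≤ 2*A := by exact_mod_cast hNA
  have e1 : 2*(A:ℝ)*s + rem = (2*(c:ℝ)+1)*N := by exact_mod_cast hdm
  have e2 : (rem:ℝ) < 2*A := by exact_mod_cast hrem
  have e3 : (0:ℝ) ≤ rem := Nat.cast_nonneg _
  have hd : (0:ℝ) < 2*(A:ℝ)*N := by positivity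
  apply seg_lb'
  · have l : (c:ℝ)*(A:ℝ)⁻¹ + 1/(2*A) = (2*(c:ℝ)*N + N)/(2*A*N) := by field_simp
    have r : ((c:ℝ)+1)*(A:ℝ)⁻¹ = (2*(A:ℝ)*N*(c+1)/A)/(2*A*N) := by field_simp
    rw [l, r, div_le_div_iff_of_pos_right hd]
    have : (2*(A:ℝ)*N*(c+1)/A) = 2*(c:ℝ)*N + 2*N := by field_simp
    rw [this]; linarith
  · have l : (c:ℝ)*(A:ℝ)⁻¹ + 1/(2*A) = (2*(c:ℝ)*N + N)/(2*A*N) := by field_simp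
    have r : ((s:ℝ)+1)*(N:ℝ)⁻¹ = (2*(A:ℝ)*s + 2*A)/(2*A*N) := by field_simp
    rw [l, r, div_le_div_iff_of_pos_right hd]
    linarith
  · have l : (s:ℝ)*(N:ℝ)⁻¹ + 1/(2*A) = (2*(A:ℝ)*s + N)/(2*A*N) := by field_simp
    have r : ((c:ℝ)+1)*(A:ℝ)⁻¹ = (2*(c:ℝ)*N + 2*N)/(2*A*N) := by field_simp
    rw [l, r, div_le_div_iff_of_pos_right hd]
    linarith
  · have l : (s:ℝ)*(N:ℝ)⁻¹ + 1/(2*A) = (2*(A:ℝ)*s + N)/(2*A*N) := by field_simp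
    have r : ((s:ℝ)+1)*(N:ℝ)⁻¹ = (2*(A:ℝ)*s + 2*A)/(2*A*N) := by field_simp
    rw [l, r, div_le_div_iff_of_pos_right hd]
    linarith

lemma left_seg (A N c s r : ℕ) (hA : 0 < A) (hN : 0 < N) (hNA : N ≤ 2*A)
    (hdm : A*s + r = (c+1)*N) (hr : r < A) :
    (r:ℝ)/(2*(A:ℝ)^2) ≤ max (min (((c:ℝ)+1)*(A:ℝ)⁻¹) (((s:ℝ)+1)*(N:ℝ)⁻¹)
      - max ((c:ℝ)*(A:ℝ)⁻¹) ((s:ℝ)*(N:ℝ)⁻¹)) 0 := by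
  have haR : (0:ℝ) < A := by exact_mod_cast hA
  have hnR : (0:ℝ) < N := by exact_mod_cast hN
  have hNAR : (N:ℝ) ≤ 2*A := by exact_mod_cast hNA
  have e1 : (A:ℝ)*s + r = ((c:ℝ)+1)*N := by exact_mod_cast hdm
  have e2 : (r:ℝ) < A := by exact_mod_cast hr
  have e3 : (0:ℝ) ≤ r := Nat.cast_nonneg _
  have hd : (0:ℝ) < 2*(A:ℝ)^2*N := by positivity
  have hp1 : (0:ℝ) ≤ ((A:ℝ) - r)*N := by nlinarith
  have hp2 : (0:ℝ) ≤ (r:ℝ)*(2*A - N) := by nlinarith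
  apply seg_lb'
  · have l : (c:ℝ)*(A:ℝ)⁻¹ + (r:ℝ)/(2*(A:ℝ)^2) = (2*(A:ℝ)*c*N + r*N)/(2*(A:ℝ)^2*N) := by
      field_simp
    have hi : ((c:ℝ)+1)*(A:ℝ)⁻¹ = (2*(A:ℝ)*c*N + 2*A*N)/(2*(A:ℝ)^2*N) := by field_simp
    rw [l, hi, div_le_div_iff_of_pos_right hd]; nlinarith
  · have l : (c:ℝ)*(A:ℝ)⁻¹ + (r:ℝ)/(2*(A:ℝ)^2) = (2*(A:ℝ)*c*N + r*N)/(2*(A:ℝ)^2*N) := by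
      field_simp
    have hi : ((s:ℝ)+1)*(N:ℝ)⁻¹ = (2*(A:ℝ)^2*s + 2*(A:ℝ)^2)/(2*(A:ℝ)^2*N) := by field_simp
    rw [l, hi, div_le_div_iff_of_pos_right hd]
    -- 2AcN + rN ≤ 2A²s + 2A² ; A s = (c+1)N - r
    nlinarith [e1, hp1, hp2]
  · have l : (s:ℝ)*(N:ℝ)⁻¹ + (r:ℝ)/(2*(A:ℝ)^2) = (2*(A:ℝ)^2*s + r*N)/(2*(A:ℝ)^2*N) := by
      field_simp
    have hi : ((c:ℝ)+1)*(A:ℝ)⁻¹ = (2*(A:ℝ)*c*N + 2*A*N)/(2*(A:ℝ)^2*N) := by field_simp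
    rw [l, hi, div_le_div_iff_of_pos_right hd]
    nlinarith [e1, hp2]
  · have l : (s:ℝ)*(N:ℝ)⁻¹ + (r:ℝ)/(2*(A:ℝ)^2) = (2*(A:ℝ)^2*s + r*N)/(2*(A:ℝ)^2*N) := by
      field_simp
    have hi : ((s:ℝ)+1)*(N:ℝ)⁻¹ = (2*(A:ℝ)^2*s + 2*(A:ℝ)^2)/(2*(A:ℝ)^2*N) := by field_simp
    rw [l, hi, div_le_div_iff_of_pos_right hd]
    have h1 : (r:ℝ)*N ≤ (A:ℝ)*N := by nlinarith [hp1]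
    have h2 : (A:ℝ)*N ≤ 2*(A:ℝ)^2 := by nlinarith
    linarith

lemma right_seg (A N c s r : ℕ) (hA : 0 < A) (hN : 0 < N) (hNA : N ≤ 2*A)
    (hdm : A*s + r = (c+1)*N) (hr : r < A) :
    ((A:ℝ) - r)/(2*(A:ℝ)^2) ≤ max (min (((c:ℝ)+1+1)*(A:ℝ)⁻¹) (((s:ℝ)+1)*(N:ℝ)⁻¹)
      - max (((c:ℝ)+1)*(A:ℝ)⁻¹) ((s:ℝ)*(N:ℝ)⁻¹)) 0 := by
  have haR : (0:ℝ) < A := by exact_mod_cast hA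
  have hnR : (0:ℝ) < N := by exact_mod_cast hN
  have hNAR : (N:ℝ) ≤ 2*A := by exact_mod_cast hNA
  have e1 : (A:ℝ)*s + r = ((c:ℝ)+1)*N := by exact_mod_cast hdm
  have e2 : (r:ℝ) < A := by exact_mod_cast hr
  have e3 : (0:ℝ) ≤ r := Nat.cast_nonneg _
  have hd : (0:ℝ) < 2*(A:ℝ)^2*N := by positivity
  have hp1 : (0:ℝ) ≤ ((A:ℝ) - r)*N := by nlinarith
  have hp3 : (0:ℝ) ≤ ((A:ℝ) - r)*(2*A - N) := by nlinarith
  apply seg_lb'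
  · have l : ((c:ℝ)+1)*(A:ℝ)⁻¹ + ((A:ℝ)-r)/(2*(A:ℝ)^2)
        = (2*(A:ℝ)*(c+1)*N + (A - r)*N)/(2*(A:ℝ)^2*N) := by field_simp
    have hi : ((c:ℝ)+1+1)*(A:ℝ)⁻¹ = (2*(A:ℝ)*(c+1)*N + 2*A*N)/(2*(A:ℝ)^2*N) := by
      field_simp
    rw [l, hi, div_le_div_iff_of_pos_right hd]; nlinarith [hp1]
  · have l : ((c:ℝ)+1)*(A:ℝ)⁻¹ + ((A:ℝ)-r)/(2*(A:ℝ)^2)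
        = (2*(A:ℝ)*(c+1)*N + (A - r)*N)/(2*(A:ℝ)^2*N) := by field_simp
    have hi : ((s:ℝ)+1)*(N:ℝ)⁻¹ = (2*(A:ℝ)^2*s + 2*(A:ℝ)^2)/(2*(A:ℝ)^2*N) := by field_simp
    rw [l, hi, div_le_div_iff_of_pos_right hd]
    nlinarith [e1, hp3]
  · have l : (s:ℝ)*(N:ℝ)⁻¹ + ((A:ℝ)-r)/(2*(A:ℝ)^2)
        = (2*(A:ℝ)^2*s + (A-r)*N)/(2*(A:ℝ)^2*N) := by field_simp
    have hi : ((c:ℝ)+1+1)*(A:ℝ)⁻¹ = (2*(A:ℝ)*(c+1)*N + 2*A*N)/(2*(A:ℝ)^2*N) := by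
      field_simp
    rw [l, hi, div_le_div_iff_of_pos_right hd]
    nlinarith [e1, hp1]
  · have l : (s:ℝ)*(N:ℝ)⁻¹ + ((A:ℝ)-r)/(2*(A:ℝ)^2)
        = (2*(A:ℝ)^2*s + (A-r)*N)/(2*(A:ℝ)^2*N) := by field_simp
    have hi : ((s:ℝ)+1)*(N:ℝ)⁻¹ = (2*(A:ℝ)^2*s + 2*(A:ℝ)^2)/(2*(A:ℝ)^2*N) := by field_simp
    rw [l, hi, div_le_div_iff_of_pos_right hd]
    have h2 : ((A:ℝ)-r)*N ≤ 2*(A:ℝ)^2 := by nlinarith [hp3, mul_nonneg e3 haR.le]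
    linarith

lemma term_lb (A N : ℕ) (k : Fin 3 → ℕ) (hA2 : 2 ≤ A) (hN1 : 1 ≤ N)
    (hNA : N ≤ 2*A) (hAN : A ≤ 2*N) (hq : k 0 + 1 < A) :
    ((((k 0 + 1)*N % A : ℕ)):ℝ)/(A:ℝ) * (1 - (((k 0 + 1)*N % A : ℕ):ℝ)/(A:ℝ)) / 512 ≤
      (volume (B (A:ℝ)⁻¹ k ∩ B (N:ℝ)⁻¹
          (fun i => if i = 0 then (k 0 + 1)*N/A else (2*(k i)+1)*N/(2*A)))).toReal *
      (volume (B (A:ℝ)⁻¹ (fun i => k i + if i = 0 then 1 else 0) ∩ B (N:ℝ)⁻¹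
          (fun i => if i = 0 then (k 0 + 1)*N/A else (2*(k i)+1)*N/(2*A)))).toReal /
      (((A:ℝ)⁻¹)^3 * ((N:ℝ)⁻¹)^3) := by
  have hA0 : 0 < A := by omega
  have hN0 : 0 < N := by omega
  have ha : (0:ℝ) < A := by exact_mod_cast hA0
  have hn : (0:ℝ) < N := by exact_mod_cast hN0
  have hANR : (A:ℝ) ≤ 2*N := by exact_mod_cast hAN
  have hP0 := left_seg A N (k 0) ((k 0 + 1)*N/A) ((k 0 + 1)*N % A) hA0 hN0 hNA
    (Nat.div_add_mod _ _) (Nat.mod_lt _ hA0)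
  have hQ0 := right_seg A N (k 0) ((k 0 + 1)*N/A) ((k 0 + 1)*N % A) hA0 hN0 hNA
    (Nat.div_add_mod _ _) (Nat.mod_lt _ hA0)
  have hP1 := mid_seg A N (k 1) ((2*(k 1)+1)*N/(2*A)) ((2*(k 1)+1)*N % (2*A)) hA0 hN0 hNA
    (Nat.div_add_mod _ _) (Nat.mod_lt _ (by omega))
  have hP2 := mid_seg A N (k 2) ((2*(k 2)+1)*N/(2*A)) ((2*(k 2)+1)*N % (2*A)) hA0 hN0 hNA
    (Nat.div_add_mod _ _) (Nat.mod_lt _ (by omega))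
  have hr0 : (0:ℝ) ≤ (((k 0 + 1)*N % A : ℕ):ℝ) := Nat.cast_nonneg _
  have hrA : (((k 0 + 1)*N % A : ℕ):ℝ) < A := by exact_mod_cast Nat.mod_lt _ hA0
  have hAr : (0:ℝ) ≤ (A:ℝ) - (((k 0 + 1)*N % A : ℕ):ℝ) := by linarith
  rw [volB_inter, volB_inter, Fin.prod_univ_three, Fin.prod_univ_three]
  simp only [show ((1:Fin 3) = 0) = False from by simp, show ((2:Fin 3) = 0) = False from by simp,
    if_true, if_false, add_zero, reduceIte]
  push_cast
  set r : ℝ := (((k 0 + 1)*N % A : ℕ):ℝ) with hrdef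
  set P0 := max ((((k 0:ℕ):ℝ) + 1) * (A:ℝ)⁻¹ ⊓ (((((k 0 + 1) * N / A : ℕ)):ℝ) + 1) * (N:ℝ)⁻¹ -
      ((k 0:ℕ):ℝ) * (A:ℝ)⁻¹ ⊔ ((((k 0 + 1) * N / A : ℕ)):ℝ) * (N:ℝ)⁻¹) 0 with hP0def
  set P1 := max ((((k 1:ℕ):ℝ) + 1) * (A:ℝ)⁻¹ ⊓ (((((2 * k 1 + 1) * N / (2 * A) : ℕ)):ℝ) + 1) * (N:ℝ)⁻¹ -
      ((k 1:ℕ):ℝ) * (A:ℝ)⁻¹ ⊔ ((((2 * k 1 + 1) * N / (2 * A) : ℕ)):ℝ) * (N:ℝ)⁻¹) 0 with hP1def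
  set P2 := max ((((k 2:ℕ):ℝ) + 1) * (A:ℝ)⁻¹ ⊓ (((((2 * k 2 + 1) * N / (2 * A) : ℕ)):ℝ) + 1) * (N:ℝ)⁻¹ -
      ((k 2:ℕ):ℝ) * (A:ℝ)⁻¹ ⊔ ((((2 * k 2 + 1) * N / (2 * A) : ℕ)):ℝ) * (N:ℝ)⁻¹) 0 with hP2def
  set Q0 := max ((((k 0:ℕ):ℝ) + 1 + 1) * (A:ℝ)⁻¹ ⊓ (((((k 0 + 1) * N / A : ℕ)):ℝ) + 1) * (N:ℝ)⁻¹ -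
      (((k 0:ℕ):ℝ) + 1) * (A:ℝ)⁻¹ ⊔ ((((k 0 + 1) * N / A : ℕ)):ℝ) * (N:ℝ)⁻¹) 0 with hQ0def
  have hP0n : (0:ℝ) ≤ P0 := le_max_right _ 0
  have hP1n : (0:ℝ) ≤ P1 := le_max_right _ 0
  have hP2n : (0:ℝ) ≤ P2 := le_max_right _ 0
  have hQ0n : (0:ℝ) ≤ Q0 := le_max_right _ 0
  have hdiv : P0 * P1 * P2 * (Q0 * P1 * P2) / ((A:ℝ)⁻¹^3 * (N:ℝ)⁻¹^3)
      = P0 * P1 * P2 * (Q0 * P1 * P2) * ((A:ℝ)^3 * (N:ℝ)^3) := by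
    rw [div_eq_mul_inv, mul_inv, inv_pow, inv_pow, inv_inv, inv_inv]
  rw [hdiv]
  have hcube : (A:ℝ)^3 ≤ 8*(N:ℝ)^3 := by
    have h := pow_le_pow_left₀ ha.le hANR 3
    nlinarith [h]
  have step1 : r/(A:ℝ) * (1 - r/(A:ℝ)) / 512
      ≤ (r/(2*(A:ℝ)^2)*(1/(2*(A:ℝ)))*(1/(2*(A:ℝ)))) *
        ((((A:ℝ)-r)/(2*(A:ℝ)^2))*(1/(2*(A:ℝ)))*(1/(2*(A:ℝ)))) * ((A:ℝ)^3*(N:ℝ)^3) := by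
    have e1 : r/(A:ℝ) * (1 - r/(A:ℝ)) / 512 = (r*((A:ℝ)-r)) * (1/(512*(A:ℝ)^2)) := by
      rw [div_mul_eq_mul_div, div_div, mul_one_div]
      rw [div_eq_div_iff (by positivity) (by positivity)]
      field_simp
    have e2 : (r/(2*(A:ℝ)^2)*(1/(2*(A:ℝ)))*(1/(2*(A:ℝ)))) *
        ((((A:ℝ)-r)/(2*(A:ℝ)^2))*(1/(2*(A:ℝ)))*(1/(2*(A:ℝ)))) * ((A:ℝ)^3*(N:ℝ)^3)
        = (r*((A:ℝ)-r)) * ((N:ℝ)^3/(64*(A:ℝ)^5)) := by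
      field_simp; ring
    rw [e1, e2]
    apply mul_le_mul_of_nonneg_left _ (mul_nonneg hr0 hAr)
    rw [div_le_div_iff₀ (by positivity) (by positivity)]
    nlinarith [mul_nonneg (mul_pos ha ha).le (by linarith : (0:ℝ) ≤ 8*(N:ℝ)^3 - (A:ℝ)^3)]
  refine le_trans step1 ?_
  apply mul_le_mul_of_nonneg_right _ (by positivity)
  have A1 : r/(2*(A:ℝ)^2)*(1/(2*(A:ℝ)))*(1/(2*(A:ℝ))) ≤ P0 * P1 * P2 := by
    have b1 : (1:ℝ)/(2*(A:ℝ)) ≤ P1 := hP1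
    have b2 : (1:ℝ)/(2*(A:ℝ)) ≤ P2 := hP2
    have b0 : r/(2*(A:ℝ)^2) ≤ P0 := hP0
    have h01 : r/(2*(A:ℝ)^2)*(1/(2*(A:ℝ))) ≤ P0 * P1 :=
      mul_le_mul b0 b1 (by positivity) hP0n
    exact mul_le_mul h01 b2 (by positivity) (mul_nonneg hP0n hP1n)
  have A2 : (((A:ℝ)-r)/(2*(A:ℝ)^2))*(1/(2*(A:ℝ)))*(1/(2*(A:ℝ))) ≤ Q0 * P1 * P2 := by
    have b1 : (1:ℝ)/(2*(A:ℝ)) ≤ P1 := hP1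
    have b2 : (1:ℝ)/(2*(A:ℝ)) ≤ P2 := hP2
    have b0 : ((A:ℝ)-r)/(2*(A:ℝ)^2) ≤ Q0 := hQ0
    have h01 : ((A:ℝ)-r)/(2*(A:ℝ)^2)*(1/(2*(A:ℝ))) ≤ Q0 * P1 :=
      mul_le_mul b0 b1 (by positivity) hQ0n
    exact mul_le_mul h01 b2 (by positivity) (mul_nonneg hQ0n hP1n)
  exact mul_le_mul A1 A2 (by positivity) (mul_nonneg (mul_nonneg hP0n hP1n) hP2n)

/-- Lower bound on the nearest-neighbour edge weight of the discrete operator `L(ℓ_m)`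
arising from the family of partitions with side lengths `ℓ_n = ℓ/(1 − nℓ)`:
`Σ_{n=0}^{⌊1/(2ℓ)⌋} Σ_{s'} |B_{ℓ_m,k} ∩ B_{ℓ_n,s'}||B_{ℓ_m,k+e₁} ∩ B_{ℓ_n,s'}|/(ℓ_m³ ℓ_n³)
 ≥ C ℓ⁻¹`. -/
theorem nearest_neighbour_weight_lower_bound :
    ∃ C > (0 : ℝ), ∀ (M : ℕ) (ℓ : ℝ), 0 < M → ℓ = (M : ℝ)⁻¹ →
      ∀ m : ℕ, 2 * m ≤ M →
      ∀ k : Fin 3 → ℕ, (∀ i, k i < M - m) → k 0 + 1 ≤ M - m - 1 →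
      (∑ n ∈ Finset.range (M / 2 + 1),
          ∑ s' ∈ Fintype.piFinset (fun _ : Fin 3 => Finset.range (M - n)),
            (volume (B (ℓ / (1 - (m : ℝ) * ℓ)) k ∩ B (ℓ / (1 - (n : ℝ) * ℓ)) s')).toReal *
              (volume (B (ℓ / (1 - (m : ℝ) * ℓ)) (fun i => k i + if i = 0 then 1 else 0) ∩
                B (ℓ / (1 - (n : ℝ) * ℓ)) s')).toReal /
              ((ℓ / (1 - (m : ℝ) * ℓ)) ^ 3 * (ℓ / (1 - (n : ℝ) * ℓ)) ^ 3))
        ≥ C * ℓ⁻¹ := by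
  refine ⟨1/131072, by norm_num, ?_⟩
  intro M ℓ hM hℓ m hm k hk hk0
  subst hℓ
  have hM2 : 2 ≤ M := by omega
  set A := M - m with hAdef
  have hA2 : 2 ≤ A := by omega
  have hAM : A ≤ M := by omega
  have hMA : M ≤ 2*A := by omega
  have hqA : k 0 + 1 < A := by omega
  have hcast : ∀ n : ℕ, n ≤ M/2 → (M:ℝ)⁻¹ / (1 - (n:ℝ) * (M:ℝ)⁻¹) = ((M - n : ℕ):ℝ)⁻¹ := by
    intro n hn
    have hnM : n ≤ M := by omega
    have h0 : ((M - n : ℕ):ℝ) = (M:ℝ) - n := by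
      push_cast [Nat.cast_sub hnM]; ring
    have hMne : (M:ℝ) ≠ 0 := by positivity
    have hMn0 : ((M:ℝ) - n) ≠ 0 := by
      have : (n:ℝ) < M := by exact_mod_cast (by omega : n < M)
      linarith
    rw [h0]
    rw [show (1 - (n:ℝ) * (M:ℝ)⁻¹) = ((M:ℝ) - n) * (M:ℝ)⁻¹ by field_simp]
    field_simp
  have hℓm : (M:ℝ)⁻¹ / (1 - (m:ℝ) * (M:ℝ)⁻¹) = ((A : ℕ):ℝ)⁻¹ := hcast m (by omega)
  rw [inv_inv]
  rw [ge_iff_le]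
  have hsum_eq : ∀ n ∈ Finset.range (M/2+1),
      (∑ s' ∈ Fintype.piFinset (fun _ : Fin 3 => Finset.range (M - n)),
        (volume (B ((M:ℝ)⁻¹ / (1 - (m : ℝ) * (M:ℝ)⁻¹)) k ∩
            B ((M:ℝ)⁻¹ / (1 - (n : ℝ) * (M:ℝ)⁻¹)) s')).toReal *
          (volume (B ((M:ℝ)⁻¹ / (1 - (m : ℝ) * (M:ℝ)⁻¹)) (fun i => k i + if i = 0 then 1 else 0) ∩
            B ((M:ℝ)⁻¹ / (1 - (n : ℝ) * (M:ℝ)⁻¹)) s')).toReal /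
          (((M:ℝ)⁻¹ / (1 - (m : ℝ) * (M:ℝ)⁻¹)) ^ 3 * ((M:ℝ)⁻¹ / (1 - (n : ℝ) * (M:ℝ)⁻¹)) ^ 3))
      = ∑ s' ∈ Fintype.piFinset (fun _ : Fin 3 => Finset.range (M - n)),
        (volume (B ((A:ℕ):ℝ)⁻¹ k ∩ B (((M - n : ℕ)):ℝ)⁻¹ s')).toReal *
          (volume (B ((A:ℕ):ℝ)⁻¹ (fun i => k i + if i = 0 then 1 else 0) ∩
            B (((M - n : ℕ)):ℝ)⁻¹ s')).toReal /
          ((((A:ℕ):ℝ)⁻¹) ^ 3 * ((((M - n : ℕ)):ℝ)⁻¹) ^ 3) := by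
    intro n hn
    rw [Finset.mem_range] at hn
    rw [hℓm, hcast n (by omega)]
  rw [Finset.sum_congr rfl hsum_eq]
  have hbound : ∀ n ∈ Finset.range (M/2+1),
      (((k 0 + 1)*(M-n) % A : ℕ):ℝ)/(A:ℝ) * (1 - (((k 0 + 1)*(M-n) % A : ℕ):ℝ)/(A:ℝ)) / 512
      ≤ ∑ s' ∈ Fintype.piFinset (fun _ : Fin 3 => Finset.range (M - n)),
        (volume (B ((A:ℕ):ℝ)⁻¹ k ∩ B (((M - n : ℕ)):ℝ)⁻¹ s')).toReal *
          (volume (B ((A:ℕ):ℝ)⁻¹ (fun i => k i + if i = 0 then 1 else 0) ∩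
            B (((M - n : ℕ)):ℝ)⁻¹ s')).toReal /
          ((((A:ℕ):ℝ)⁻¹) ^ 3 * ((((M - n : ℕ)):ℝ)⁻¹) ^ 3) := by
    intro n hn
    rw [Finset.mem_range] at hn
    set N := M - n with hNdef
    have hN1 : 1 ≤ N := by omega
    have hNA : N ≤ 2*A := by omega
    have hAN : A ≤ 2*N := by omega
    have hmem : (fun i : Fin 3 => if i = 0 then (k 0 + 1)*N/A else (2*(k i)+1)*N/(2*A))
        ∈ Fintype.piFinset (fun _ : Fin 3 => Finset.range N) := by
      rw [Fintype.mem_piFinset]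
      intro i
      rw [Finset.mem_range]
      by_cases hi : i = 0
      · rw [hi]; simp only [if_true, reduceIte]
        exact Nat.div_lt_of_lt_mul (mul_lt_mul_of_pos_right hqA (by omega))
      · rw [if_neg hi]
        exact Nat.div_lt_of_lt_mul (mul_lt_mul_of_pos_right (by have := hk i; omega) (by omega))
    refine le_trans (term_lb A N k hA2 hN1 hNA hAN hqA) ?_
    apply Finset.single_le_sum (f := fun s' =>
      (volume (B ((A:ℕ):ℝ)⁻¹ k ∩ B (((N : ℕ)):ℝ)⁻¹ s')).toReal *
        (volume (B ((A:ℕ):ℝ)⁻¹ (fun i => k i + if i = 0 then 1 else 0) ∩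
          B (((N : ℕ)):ℝ)⁻¹ s')).toReal /
        ((((A:ℕ):ℝ)⁻¹) ^ 3 * ((((N : ℕ)):ℝ)⁻¹) ^ 3)) ?_ hmem
    intro s' _
    have hA0R : (0:ℝ) < ((A:ℕ):ℝ) := by exact_mod_cast (by omega : 0 < A)
    have hN0R : (0:ℝ) < ((N:ℕ):ℝ) := by exact_mod_cast (by omega : 0 < N)
    positivity
  have harith := arith_main A (k 0 + 1) M hA2 hAM hMA (by omega) hqA
  calc (1/131072) * (M:ℝ) = ((M:ℝ)/256) / 512 := by ring
    _ ≤ (∑ n ∈ Finset.range (M/2+1),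
          (((k 0 + 1)*(M-n) % A : ℕ):ℝ)/(A:ℝ) * (1 - (((k 0 + 1)*(M-n) % A : ℕ):ℝ)/(A:ℝ))) / 512 := by
        linarith [harith]
    _ = ∑ n ∈ Finset.range (M/2+1),
          (((k 0 + 1)*(M-n) % A : ℕ):ℝ)/(A:ℝ) * (1 - (((k 0 + 1)*(M-n) % A : ℕ):ℝ)/(A:ℝ)) / 512 := by
        rw [Finset.sum_div]
    _ ≤ _ := Finset.sum_le_sum hbound
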